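/- For every [a] ∈ Λ₃: |Λ₁^3(a)| = 4, |Λ₂^2(a)| = 6, |Λ₂^3(a)| = 12, |Λ₂^6(a)| = 6, |Λ₃^2(a)| = 6, |Λ₃^3(a)| = 16, |Λ₃^6(a)| = 9, and |Λ₁^2(a)| = |Λ₁^6(a)| = 0. -/

import Mathlib

open Complex

noncomputable section

namespace G31

/-- Vectors `a = (a₁,a₂,a₃,a₄) ∈ ℂ⁴`. -/
abbrev V : Type := Fin 4 → ℂ

/-- `μ₄ ⊂ ℂ`, the group of fourth roots of unity `{1, i, -1, -i}`. -/
def mu4 : Set ℂ := {z : ℂ | z ^ 4 = 1}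

/-- `Ψ = μ₄ ∪ {0}`. -/
def Psi : Set ℂ := insert 0 mu4

/-- `a ∈ Ψ⁴`. -/
def PsiV (a : V) : Prop := ∀ k, a k ∈ Psi

/-- The diagonal multiplicative action of `μ₄` on `ℂ⁴`: `a ~ b` iff `b = ξ • a` for some
`ξ ∈ μ₄`. -/
def rel (a b : V) : Prop := ∃ ξ : ℂ, ξ ^ 4 = 1 ∧ b = ξ • a

theorem rel_refl (a : V) : rel a a := ⟨1, by norm_num, by simp⟩

theorem rel_symm {a b : V} (h : rel a b) : rel b a := by
  obtain ⟨ξ, hξ, rfl⟩ := h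
  refine ⟨ξ ^ 3, by rw [show (ξ ^ 3) ^ 4 = (ξ ^ 4) ^ 3 by ring, hξ, one_pow], ?_⟩
  rw [smul_smul, show ξ ^ 3 * ξ = ξ ^ 4 by ring, hξ, one_smul]

theorem rel_trans {a b c : V} (h : rel a b) (h' : rel b c) : rel a c := by
  obtain ⟨ξ, hξ, rfl⟩ := h
  obtain ⟨η, hη, rfl⟩ := h'
  exact ⟨η * ξ, by rw [mul_pow, hξ, hη, one_mul], by rw [smul_smul]⟩

/-- The setoid on `ℂ⁴` given by the diagonal `μ₄`-action. -/
def phiSetoid : Setoid V := ⟨rel, rel_refl, rel_symm, rel_trans⟩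

/-- `Φ`, the quotient of `Ψ⁴` (here of `ℂ⁴`) by the diagonal `μ₄`-action. -/
def Phi : Type := Quotient phiSetoid

/-- The class `[a] ∈ Φ` of `a`. -/
def cls (a : V) : Phi := Quotient.mk phiSetoid a

/-- `Supp a = {k : aₖ ≠ 0}`. -/
def Supp (a : V) : Set (Fin 4) := {k | a k ≠ 0}

/-- `prod a = a₁a₂a₃a₄`. -/
def prod4 (a : V) : ℂ := ∏ k, a k

/-- The hyperplane `X_a = {x : ∑ aₖ xₖ = 0} ⊂ ℂ⁴`. -/
def Xa (a : V) : Set V := {x | ∑ k, a k * x k = 0}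

/-- The support of a class `[a] ∈ Φ` (independent of the representative). -/
def SuppC (c : Phi) : Set (Fin 4) := {k | ∃ a : V, cls a = c ∧ a k ≠ 0}

/-- `Λ₁ = {[a] : a ∈ Ψ⁴, |Supp a| = 1}`. -/
def Lambda1 : Set Phi := {c | ∃ a : V, cls a = c ∧ PsiV a ∧ (Supp a).ncard = 1}

/-- `Λ₂ = {[a] : a ∈ Ψ⁴, |Supp a| = 2}`. -/
def Lambda2 : Set Phi := {c | ∃ a : V, cls a = c ∧ PsiV a ∧ (Supp a).ncard = 2}

/-- `Λ₃ = {[a] : a ∈ Ψ⁴, |Supp a| = 4, prod a = ±1}`. -/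
def Lambda3 : Set Phi :=
  {c | ∃ a : V, cls a = c ∧ PsiV a ∧ (Supp a).ncard = 4 ∧ (prod4 a = 1 ∨ prod4 a = -1)}

/-- `Λ = Λ₁ ⊔ Λ₂ ⊔ Λ₃`, the hyperplanes of the reflection arrangement of type `G₃₁`. -/
def Lambda : Set Phi := Lambda1 ∪ Lambda2 ∪ Lambda3

/-- `Λ̂(a,b) = {[c] ∈ Λ : X_c ⊇ X_a ∩ X_b}` (all notions independent of representatives). -/
def LambdaHat (A B : Phi) : Set Phi :=
  {c | c ∈ Lambda ∧ ∃ xa xb xc : V, cls xa = A ∧ cls xb = B ∧ cls xc = c ∧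
    Xa xa ∩ Xa xb ⊆ Xa xc}

/-- `mult(a,b) = |Λ̂(a,b)|`. -/
def mult (A B : Phi) : ℕ := (LambdaHat A B).ncard

/-- `Λ(a,b) = Λ̂(a,b) \ {[a],[b]}`. -/
def LambdaAB (A B : Phi) : Set Phi := LambdaHat A B \ {A, B}

/-- `Λ_{j'}^m(a) = {[b] ∈ Λ_{j'} : [b] ≠ [a], mult(a,b) = m}`, where `S` stands for `Λ_{j'}`. -/
def LambdaPow (S : Set Phi) (m : ℕ) (A : Phi) : Set Phi :=
  {B | B ∈ S ∧ B ≠ A ∧ mult A B = m}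

/-- `diff([a],[b]) = min_ξ |Supp (ξ a − b)|`, the minimum over representatives. -/
def diffC (A B : Phi) : ℕ :=
  sInf {n | ∃ a b : V, cls a = A ∧ cls b = B ∧ (Supp (a - b)).ncard = n}

end G31
namespace G31

/-! ### Auxiliary development: a finite Gaussian-integer model of the arrangement -/

/-- decode of entry codes `0,1,2,3,4 ↦ 0,1,i,-1,-i` into the Gaussian integers. -/
def dec : Fin 5 → GaussianInt := ![0, 1, ⟨0,1⟩, -1, ⟨0,-1⟩]

/-- code-level multiplication table. -/
def tmul : Fin 5 → Fin 5 → Fin 5 :=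
  ![![0,0,0,0,0], ![0,1,2,3,4], ![0,2,3,4,1], ![0,3,4,1,2], ![0,4,1,2,3]]

lemma dec_tmul : ∀ a b : Fin 5, dec (tmul a b) = dec a * dec b := by decide
lemma dec_inj : ∀ a b : Fin 5, dec a = dec b → a = b := by decide
lemma dec_eq_zero : ∀ a : Fin 5, dec a = 0 ↔ a = 0 := by decide
lemma dec_pow4 : ∀ a : Fin 5, a ≠ 0 → dec a ^ 4 = 1 := by decide

/-- model vectors: codes for the 4 coordinates. -/
abbrev MM : Type := Fin 4 → Fin 5

/-- boolean equality of model vectors. -/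
def beqMM (p q : MM) : Bool := p 0 == q 0 && p 1 == q 1 && p 2 == q 2 && p 3 == q 3

lemma fin4_cases : ∀ k : Fin 4, k = 0 ∨ k = 1 ∨ k = 2 ∨ k = 3 := by decide

lemma beqMM_iff {p q : MM} : beqMM p q = true ↔ p = q := by
  constructor
  · intro h
    simp only [beqMM, Bool.and_eq_true, beq_iff_eq] at h
    funext k
    rcases fin4_cases k with rfl | rfl | rfl | rfl <;> tauto
  · rintro rfl; simp [beqMM]

lemma mem_iff_any {x : MM} {l : List MM} : x ∈ l ↔ l.any (beqMM x) = true := by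
  induction l with
  | nil => simp
  | cons a l ih =>
      simp only [List.mem_cons, List.any_cons, Bool.or_eq_true, ih]
      constructor
      · rintro (rfl | h)
        · exact Or.inl (beqMM_iff.mpr rfl)
        · exact Or.inr h
      · rintro (h | h)
        · exact Or.inl (beqMM_iff.mp h)
        · exact Or.inr h

/-- boolean Nodup check. -/
def nodupB : List MM → Bool
  | [] => true
  | x :: xs => !(xs.any (beqMM x)) && nodupB xs

lemma nodup_of_nodupB {l : List MM} (h : nodupB l = true) : l.Nodup := by
  induction l with
  | nil => simp
  | cons a l ih =>
      simp only [nodupB, Bool.and_eq_true, Bool.not_eq_true'] at h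
      refine List.nodup_cons.mpr ⟨fun hmem => ?_, ih h.2⟩
      rw [mem_iff_any] at hmem
      rw [h.1] at hmem
      exact Bool.false_ne_true hmem

/-- the scaling condition with scalar of code `v`. -/
def scaleEq (v : Fin 5) (p q : MM) : Prop :=
  q 0 = tmul v (p 0) ∧ q 1 = tmul v (p 1) ∧ q 2 = tmul v (p 2) ∧ q 3 = tmul v (p 3)

instance (v : Fin 5) (p q : MM) : Decidable (scaleEq v p q) := by unfold scaleEq; infer_instance

/-- the model version of the `μ₄`-relation. -/
def mrel (p q : MM) : Prop := scaleEq 1 p q ∨ scaleEq 2 p q ∨ scaleEq 3 p q ∨ scaleEq 4 p q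

instance (p q : MM) : Decidable (mrel p q) := by unfold mrel; infer_instance

/-- unit codes `1,2,3,4` for `1,i,-1,-i`. -/
def ucode : Fin 4 → Fin 5 := ![1,2,3,4]

lemma scaleEq_iff {v : Fin 5} {p q : MM} : scaleEq v p q ↔ ∀ k, q k = tmul v (p k) := by
  constructor
  · intro h k
    rcases fin4_cases k with rfl | rfl | rfl | rfl
    exacts [h.1, h.2.1, h.2.2.1, h.2.2.2]
  · intro h; exact ⟨h 0, h 1, h 2, h 3⟩

lemma mrel_iff {p q : MM} : mrel p q ↔ ∃ u : Fin 4, ∀ k, q k = tmul (ucode u) (p k) := by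
  unfold mrel
  rw [scaleEq_iff, scaleEq_iff, scaleEq_iff, scaleEq_iff]
  constructor
  · rintro (h | h | h | h)
    exacts [⟨0, h⟩, ⟨1, h⟩, ⟨2, h⟩, ⟨3, h⟩]
  · rintro ⟨u, h⟩
    rcases fin4_cases u with rfl | rfl | rfl | rfl
    exacts [Or.inl h, Or.inr (Or.inl h), Or.inr (Or.inr (Or.inl h)), Or.inr (Or.inr (Or.inr h))]

/-- embedding of the model into `ℂ⁴`. -/
def em (m : MM) : V := fun k => GaussianInt.toComplex (dec (m k))

def msupp (m : MM) : ℕ :=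
  (if m 0 = 0 then 0 else 1) + (if m 1 = 0 then 0 else 1) +
  (if m 2 = 0 then 0 else 1) + (if m 3 = 0 then 0 else 1)

def prodc (m : MM) : Fin 5 := tmul (tmul (tmul (m 0) (m 1)) (m 2)) (m 3)

def mLam1 (m : MM) : Prop := msupp m = 1
def mLam2 (m : MM) : Prop := msupp m = 2
def mLam3 (m : MM) : Prop := msupp m = 4 ∧ (prodc m = 1 ∨ prodc m = 3)

instance (m : MM) : Decidable (mLam1 m) := by unfold mLam1; infer_instance
instance (m : MM) : Decidable (mLam2 m) := by unfold mLam2; infer_instance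
instance (m : MM) : Decidable (mLam3 m) := by unfold mLam3; infer_instance

/-- code-level inverse (with junk value at `0`). -/
def cinv : Fin 5 → Fin 5 := ![1,1,4,3,2]

/-- position of first nonzero code. -/
def fnz (m : MM) : Fin 4 :=
  if m 0 ≠ 0 then 0 else if m 1 ≠ 0 then 1 else if m 2 ≠ 0 then 2 else 3

/-- canonical representative: scale so that the first nonzero code is `1`. -/
def canonize (m : MM) : MM := fun k => tmul (cinv (m (fnz m))) (m k)

/-- list of all 625 model vectors. -/
def f5 : List (Fin 5) := [0, 1, 2, 3, 4]

def allMM : List MM :=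
  f5.flatMap fun a => f5.flatMap fun b => f5.flatMap fun c => f5.map fun d => ![a, b, c, d]

lemma mem_allMM (m : MM) : m ∈ allMM := by
  have he : m = ![m 0, m 1, m 2, m 3] := by
    funext k
    rcases fin4_cases k with rfl | rfl | rfl | rfl <;> rfl
  have hf : ∀ a : Fin 5, a ∈ f5 := by decide
  rw [he, allMM]
  refine List.mem_flatMap.mpr ⟨m 0, hf _, ?_⟩
  refine List.mem_flatMap.mpr ⟨m 1, hf _, ?_⟩
  refine List.mem_flatMap.mpr ⟨m 2, hf _, ?_⟩
  exact List.mem_map.mpr ⟨m 3, hf _, rfl⟩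
def canonL1 : List MM := [![0,0,0,1], ![0,0,1,0], ![0,1,0,0], ![1,0,0,0]]
def canonL2 : List MM := [![0,0,1,1], ![0,0,1,2], ![0,0,1,3], ![0,0,1,4], ![0,1,0,1], ![0,1,0,2], ![0,1,0,3], ![0,1,0,4], ![0,1,1,0], ![0,1,2,0], ![0,1,3,0], ![0,1,4,0], ![1,0,0,1], ![1,0,0,2], ![1,0,0,3], ![1,0,0,4], ![1,0,1,0], ![1,0,2,0], ![1,0,3,0], ![1,0,4,0], ![1,1,0,0], ![1,2,0,0], ![1,3,0,0], ![1,4,0,0]]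
def canonL3 : List MM := [![1,1,1,1], ![1,1,1,3], ![1,1,2,2], ![1,1,2,4], ![1,1,3,1], ![1,1,3,3], ![1,1,4,2], ![1,1,4,4], ![1,2,1,2], ![1,2,1,4], ![1,2,2,1], ![1,2,2,3], ![1,2,3,2], ![1,2,3,4], ![1,2,4,1], ![1,2,4,3], ![1,3,1,1], ![1,3,1,3], ![1,3,2,2], ![1,3,2,4], ![1,3,3,1], ![1,3,3,3], ![1,3,4,2], ![1,3,4,4], ![1,4,1,2], ![1,4,1,4], ![1,4,2,1], ![1,4,2,3], ![1,4,3,2], ![1,4,3,4], ![1,4,4,1], ![1,4,4,3]]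
def canonL : List MM := canonL1 ++ canonL2 ++ canonL3

def base : MM := fun _ => 1

/-- generic `3×3` minor of three vectors at coordinates `i j k`. -/
def d3 {R : Type*} [CommRing R] (x y z : Fin 4 → R) (i j k : Fin 4) : R :=
  x i * (y j * z k - y k * z j) - x j * (y i * z k - y k * z i) + x k * (y i * z j - y j * z i)

/-- fast code-level `3×3` minor. -/
def d3c (p q r : MM) (i j k : Fin 4) : GaussianInt :=
  dec (tmul (tmul (p i) (q j)) (r k)) - dec (tmul (tmul (p i) (q k)) (r j))
  - dec (tmul (tmul (p j) (q i)) (r k)) + dec (tmul (tmul (p j) (q k)) (r i))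
  + dec (tmul (tmul (p k) (q i)) (r j)) - dec (tmul (tmul (p k) (q j)) (r i))

lemma d3c_eq (p q r : MM) (i j k : Fin 4) :
    d3c p q r i j k = d3 (fun t => dec (p t)) (fun t => dec (q t)) (fun t => dec (r t)) i j k := by
  simp only [d3c, d3, dec_tmul]; ring

/-- the model covering relation `X_p ∩ X_q ⊆ X_r`, expressed via minors. -/
def covZ (p q r : MM) : Prop :=
  d3c p q r 0 1 2 = 0 ∧ d3c p q r 0 1 3 = 0 ∧ d3c p q r 0 2 3 = 0 ∧ d3c p q r 1 2 3 = 0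

instance (p q r : MM) : Decidable (covZ p q r) := by unfold covZ; infer_instance

def multZ (p q : MM) : ℕ := (canonL.filter (fun r => decide (covZ p q r))).length

/-! #### boolean facts about the model, established by kernel computation -/

set_option maxRecDepth 40000

lemma B1 : canonL1.all (fun m => decide (mLam1 m)) = true := by decide +kernel
lemma B2 : canonL2.all (fun m => decide (mLam2 m)) = true := by decide +kernel
lemma B3 : canonL3.all (fun m => decide (mLam3 m)) = true := by decide +kernel
lemma B4a : allMM.all
    (fun m => !(decide (mLam1 m)) ||
      (canonL1.any (beqMM (canonize m)) && decide (mrel m (canonize m)))) = true := by decide +kernel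
lemma B4b : allMM.all
    (fun m => !(decide (mLam2 m)) ||
      (canonL2.any (beqMM (canonize m)) && decide (mrel m (canonize m)))) = true := by decide +kernel
lemma B4c : allMM.all
    (fun m => !(decide (mLam3 m)) ||
      (canonL3.any (beqMM (canonize m)) && decide (mrel m (canonize m)))) = true := by decide +kernel
lemma B5 : nodupB canonL = true := by decide +kernel
lemma B5a : nodupB canonL1 = true := by decide +kernel
lemma B5b : nodupB canonL2 = true := by decide +kernel
lemma B5c : nodupB canonL3 = true := by decide +kernel
lemma B6 : canonL.all (fun p => canonL.all (fun q => !(decide (mrel p q)) || beqMM p q)) = true := by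
  decide +kernel
lemma B7 : canonL.all (fun m => m 0 != 0 || m 1 != 0 || m 2 != 0 || m 3 != 0) = true := by decide +kernel
lemma B8 : canonL3.any (beqMM base) = true := by decide +kernel
/-! ### From the model to `ℂ⁴` -/

lemma cls_eq_iff {a b : V} : cls a = cls b ↔ rel a b :=
  ⟨fun h => Quotient.exact h, fun h => Quotient.sound h⟩

lemma pow4_cases {z : ℂ} (h : z ^ 4 = 1) : z = 1 ∨ z = I ∨ z = -1 ∨ z = -I := by
  have h4 : (z - 1) * ((z + 1) * ((z - I) * (z + I))) = 0 := by
    linear_combination h + (1 - z ^ 2) * Complex.I_sq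
  rcases mul_eq_zero.mp h4 with h1 | h4
  · exact Or.inl (sub_eq_zero.mp h1)
  rcases mul_eq_zero.mp h4 with h1 | h4
  · exact Or.inr (Or.inr (Or.inl (eq_neg_of_add_eq_zero_left h1)))
  rcases mul_eq_zero.mp h4 with h1 | h1
  · exact Or.inr (Or.inl (sub_eq_zero.mp h1))
  · exact Or.inr (Or.inr (Or.inr (eq_neg_of_add_eq_zero_left h1)))

lemma psi_pow4 {z : ℂ} (hz : z ∈ Psi) (h0 : z ≠ 0) : z ^ 4 = 1 := by
  rcases Set.mem_insert_iff.mp hz with h | h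
  · exact absurd h h0
  · exact h

lemma tc1 : GaussianInt.toComplex (dec 1) = 1 := by
  show GaussianInt.toComplex 1 = 1; exact map_one _
lemma tc0 : GaussianInt.toComplex (dec 0) = 0 := by
  show GaussianInt.toComplex 0 = 0; exact map_zero _
lemma tcI : GaussianInt.toComplex (dec 2) = I := by
  show GaussianInt.toComplex ⟨0,1⟩ = I
  rw [GaussianInt.toComplex_def]; push_cast; ring
lemma tcm1 : GaussianInt.toComplex (dec 3) = -1 := by
  show GaussianInt.toComplex (-1) = -1; rw [map_neg, map_one]
lemma tcmI : GaussianInt.toComplex (dec 4) = -I := by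
  show GaussianInt.toComplex ⟨0,-1⟩ = -I
  rw [GaussianInt.toComplex_def]; push_cast; ring

lemma em_psi (m : MM) : PsiV (em m) := by
  intro k
  by_cases h : m k = 0
  · have : em m k = 0 := by rw [em, h, tc0]
    rw [this]; exact Set.mem_insert _ _
  · refine Set.mem_insert_iff.mpr (Or.inr ?_)
    show em m k ^ 4 = 1
    rw [em, ← map_pow, dec_pow4 _ h, map_one]

lemma psi_repr {a : V} (h : PsiV a) : ∃ m : MM, em m = a := by
  have hc : ∀ k, ∃ j : Fin 5, GaussianInt.toComplex (dec j) = a k := by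
    intro k
    have hk := h k
    rw [Psi, Set.mem_insert_iff] at hk
    rcases hk with h0 | h4
    · exact ⟨0, by rw [tc0, h0]⟩
    · rcases pow4_cases h4 with h' | h' | h' | h'
      exacts [⟨1, by rw [tc1, h']⟩, ⟨2, by rw [tcI, h']⟩, ⟨3, by rw [tcm1, h']⟩,
        ⟨4, by rw [tcmI, h']⟩]
  choose m hm using hc
  exact ⟨m, funext hm⟩

lemma ucode_ne : ∀ u : Fin 4, ucode u ≠ 0 := by decide

lemma cls_em_iff {p q : MM} : cls (em p) = cls (em q) ↔ mrel p q := by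
  rw [cls_eq_iff, mrel_iff]
  constructor
  · rintro ⟨ξ, hξ, he⟩
    have hex : ∃ u : Fin 4, GaussianInt.toComplex (dec (ucode u)) = ξ := by
      rcases pow4_cases hξ with h' | h' | h' | h'
      exacts [⟨0, by rw [h']; exact tc1⟩, ⟨1, by rw [h']; exact tcI⟩,
        ⟨2, by rw [h']; exact tcm1⟩, ⟨3, by rw [h']; exact tcmI⟩]
    obtain ⟨u, rfl⟩ := hex
    refine ⟨u, fun k => ?_⟩
    have hk : GaussianInt.toComplex (dec (q k)) =
        GaussianInt.toComplex (dec (ucode u)) * GaussianInt.toComplex (dec (p k)) := by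
      have := congrFun he k
      simpa [em, Pi.smul_apply, smul_eq_mul] using this
    rw [← map_mul, ← dec_tmul] at hk
    exact dec_inj _ _ (GaussianInt.toComplex_injective hk)
  · rintro ⟨u, hu⟩
    refine ⟨GaussianInt.toComplex (dec (ucode u)), ?_, ?_⟩
    · rw [← map_pow, dec_pow4 _ (ucode_ne u), map_one]
    · funext k
      simp only [em, hu k, dec_tmul, map_mul, Pi.smul_apply, smul_eq_mul]

lemma supp_ncard (m : MM) : (Supp (em m)).ncard = msupp m := by
  classical
  have hs : Supp (em m) = {k | m k ≠ 0} := by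
    ext k
    simp only [Supp, em, ne_eq, Set.mem_setOf_eq, GaussianInt.toComplex_eq_zero, dec_eq_zero]
  rw [hs, Set.ncard_eq_toFinset_card', Set.toFinset_setOf, Finset.card_filter,
    Fin.sum_univ_four]
  simp only [ne_eq, ite_not, msupp]

lemma prod4_em (m : MM) : prod4 (em m) = GaussianInt.toComplex (dec (prodc m)) := by
  rw [prod4, Fin.prod_univ_four]
  simp only [em, prodc, dec_tmul, map_mul]

lemma prod_cond (m : MM) :
    (prod4 (em m) = 1 ∨ prod4 (em m) = -1) ↔ (prodc m = 1 ∨ prodc m = 3) := by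
  rw [prod4_em]
  constructor
  · rintro (h | h)
    · exact Or.inl (dec_inj _ _ (GaussianInt.toComplex_injective (by rw [h, tc1])))
    · exact Or.inr (dec_inj _ _ (GaussianInt.toComplex_injective (by rw [h, tcm1])))
  · rintro (h | h)
    · exact Or.inl (by rw [h, tc1])
    · exact Or.inr (by rw [h, tcm1])

/-! ### characterization of the `Λⱼ` via the canonical lists -/

lemma memL1' : ∀ m ∈ canonL1, mLam1 m := by
  have := List.all_eq_true.mp B1
  intro m hm; exact of_decide_eq_true (this m hm)
lemma memL2' : ∀ m ∈ canonL2, mLam2 m := by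
  have := List.all_eq_true.mp B2
  intro m hm; exact of_decide_eq_true (this m hm)
lemma memL3' : ∀ m ∈ canonL3, mLam3 m := by
  have := List.all_eq_true.mp B3
  intro m hm; exact of_decide_eq_true (this m hm)

lemma canonize1 : ∀ m : MM, mLam1 m → canonize m ∈ canonL1 ∧ mrel m (canonize m) := by
  have h := List.all_eq_true.mp B4a
  intro m hm
  have := h m (mem_allMM m)
  rw [Bool.or_eq_true, Bool.not_eq_true', decide_eq_false_iff_not] at this
  rcases this with h' | h'
  · exact absurd hm h'
  · rw [Bool.and_eq_true, decide_eq_true_eq] at h'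
    exact ⟨mem_iff_any.mpr h'.1, h'.2⟩
lemma canonize2 : ∀ m : MM, mLam2 m → canonize m ∈ canonL2 ∧ mrel m (canonize m) := by
  have h := List.all_eq_true.mp B4b
  intro m hm
  have := h m (mem_allMM m)
  rw [Bool.or_eq_true, Bool.not_eq_true', decide_eq_false_iff_not] at this
  rcases this with h' | h'
  · exact absurd hm h'
  · rw [Bool.and_eq_true, decide_eq_true_eq] at h'
    exact ⟨mem_iff_any.mpr h'.1, h'.2⟩
lemma canonize3 : ∀ m : MM, mLam3 m → canonize m ∈ canonL3 ∧ mrel m (canonize m) := by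
  have h := List.all_eq_true.mp B4c
  intro m hm
  have := h m (mem_allMM m)
  rw [Bool.or_eq_true, Bool.not_eq_true', decide_eq_false_iff_not] at this
  rcases this with h' | h'
  · exact absurd hm h'
  · rw [Bool.and_eq_true, decide_eq_true_eq] at h'
    exact ⟨mem_iff_any.mpr h'.1, h'.2⟩

lemma lam1_char : Lambda1 = (fun m : MM => cls (em m)) '' {m | m ∈ canonL1} := by
  ext c; constructor
  · rintro ⟨a, rfl, hpsi, hsupp⟩
    obtain ⟨m, rfl⟩ := psi_repr hpsi
    have hm : mLam1 m := by rw [mLam1, ← supp_ncard]; exact hsupp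
    obtain ⟨hc, hr⟩ := canonize1 m hm
    exact ⟨canonize m, hc, (cls_em_iff.mpr hr).symm⟩
  · rintro ⟨m, hm, rfl⟩
    exact ⟨em m, rfl, em_psi m, by rw [supp_ncard]; exact memL1' m hm⟩

lemma lam2_char : Lambda2 = (fun m : MM => cls (em m)) '' {m | m ∈ canonL2} := by
  ext c; constructor
  · rintro ⟨a, rfl, hpsi, hsupp⟩
    obtain ⟨m, rfl⟩ := psi_repr hpsi
    have hm : mLam2 m := by rw [mLam2, ← supp_ncard]; exact hsupp
    obtain ⟨hc, hr⟩ := canonize2 m hm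
    exact ⟨canonize m, hc, (cls_em_iff.mpr hr).symm⟩
  · rintro ⟨m, hm, rfl⟩
    exact ⟨em m, rfl, em_psi m, by rw [supp_ncard]; exact memL2' m hm⟩

lemma lam3_char : Lambda3 = (fun m : MM => cls (em m)) '' {m | m ∈ canonL3} := by
  ext c; constructor
  · rintro ⟨a, rfl, hpsi, hsupp, hprod⟩
    obtain ⟨m, rfl⟩ := psi_repr hpsi
    have hm : mLam3 m := by
      refine ⟨by rw [← supp_ncard]; exact hsupp, ?_⟩
      exact (prod_cond m).mp hprod
    obtain ⟨hc, hr⟩ := canonize3 m hm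
    exact ⟨canonize m, hc, (cls_em_iff.mpr hr).symm⟩
  · rintro ⟨m, hm, rfl⟩
    obtain ⟨h4, hp⟩ := memL3' m hm
    exact ⟨em m, rfl, em_psi m, by rw [supp_ncard]; exact h4, (prod_cond m).mpr hp⟩

lemma lam_char : Lambda = (fun m : MM => cls (em m)) '' {m | m ∈ canonL} := by
  have : {m : MM | m ∈ canonL} = {m | m ∈ canonL1} ∪ ({m | m ∈ canonL2} ∪ {m | m ∈ canonL3}) := by
    ext m; simp [canonL, List.mem_append, Set.mem_union, or_assoc]
  rw [Lambda, lam1_char, lam2_char, lam3_char, this, Set.image_union, Set.image_union,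
    Set.union_assoc]
/-! ### linear algebra: containment of intersections of hyperplanes via minors -/

lemma Xa_rel {a b : V} (h : rel a b) : Xa a = Xa b := by
  obtain ⟨ξ, hξ, rfl⟩ := h
  have hne : ξ ≠ 0 := by
    intro h0; rw [h0] at hξ; norm_num at hξ
  ext x
  simp only [Xa, Set.mem_setOf_eq, Pi.smul_apply, smul_eq_mul, mul_assoc, ← Finset.mul_sum]
  rw [mul_eq_zero]
  simp [hne]

lemma subset_of_comb {a b c : V} (α β : ℂ) (h : ∀ k, c k = α * a k + β * b k) :
    Xa a ∩ Xa b ⊆ Xa c := by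
  rintro x ⟨ha, hb⟩
  simp only [Xa, Set.mem_setOf_eq, Fin.sum_univ_four] at *
  rw [h 0, h 1, h 2, h 3]
  linear_combination α * ha + β * hb

lemma expand3 (a b c : V) (i j k : Fin 4) :
    c k * (a i * b j - a j * b i) =
      (c i * b j - c j * b i) * a k + (a i * c j - a j * c i) * b k + d3 a b c i j k := by
  simp only [d3]; ring

lemma suf {a b c : V} (i j : Fin 4) (hm : a i * b j - a j * b i ≠ 0)
    (hall : ∀ k, d3 a b c i j k = 0) : Xa a ∩ Xa b ⊆ Xa c := by
  apply subset_of_comb ((c i * b j - c j * b i) / (a i * b j - a j * b i))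
    ((a i * c j - a j * c i) / (a i * b j - a j * b i))
  intro k
  have h := expand3 a b c i j k
  rw [hall k, add_zero] at h
  rw [div_mul_eq_mul_div, div_mul_eq_mul_div, ← add_div, eq_div_iff hm]
  linear_combination h

lemma nec012 {a b c : V} (h : Xa a ∩ Xa b ⊆ Xa c) : d3 a b c 0 1 2 = 0 := by
  have hw : (![a 1 * b 2 - a 2 * b 1, a 2 * b 0 - a 0 * b 2, a 0 * b 1 - a 1 * b 0, 0] : V)
      ∈ Xa a ∩ Xa b := by
    constructor <;>
    · show _ = _
      rw [Fin.sum_univ_four]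
      simp only [Matrix.cons_val_zero, Matrix.cons_val_one, Matrix.head_cons,
        Matrix.cons_val_two, Matrix.cons_val_three, Matrix.tail_cons, Matrix.head_fin_const]
      ring
  have hc := h hw
  rw [Xa, Set.mem_setOf_eq, Fin.sum_univ_four] at hc
  simp only [Matrix.cons_val_zero, Matrix.cons_val_one, Matrix.head_cons,
    Matrix.cons_val_two, Matrix.cons_val_three, Matrix.tail_cons, Matrix.head_fin_const] at hc
  simp only [d3]
  linear_combination hc

lemma nec013 {a b c : V} (h : Xa a ∩ Xa b ⊆ Xa c) : d3 a b c 0 1 3 = 0 := by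
  have hw : (![a 1 * b 3 - a 3 * b 1, a 3 * b 0 - a 0 * b 3, 0, a 0 * b 1 - a 1 * b 0] : V)
      ∈ Xa a ∩ Xa b := by
    constructor <;>
    · show _ = _
      rw [Fin.sum_univ_four]
      simp only [Matrix.cons_val_zero, Matrix.cons_val_one, Matrix.head_cons,
        Matrix.cons_val_two, Matrix.cons_val_three, Matrix.tail_cons, Matrix.head_fin_const]
      ring
  have hc := h hw
  rw [Xa, Set.mem_setOf_eq, Fin.sum_univ_four] at hc
  simp only [Matrix.cons_val_zero, Matrix.cons_val_one, Matrix.head_cons,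
    Matrix.cons_val_two, Matrix.cons_val_three, Matrix.tail_cons, Matrix.head_fin_const] at hc
  simp only [d3]
  linear_combination hc

lemma nec023 {a b c : V} (h : Xa a ∩ Xa b ⊆ Xa c) : d3 a b c 0 2 3 = 0 := by
  have hw : (![a 2 * b 3 - a 3 * b 2, 0, a 3 * b 0 - a 0 * b 3, a 0 * b 2 - a 2 * b 0] : V)
      ∈ Xa a ∩ Xa b := by
    constructor <;>
    · show _ = _
      rw [Fin.sum_univ_four]
      simp only [Matrix.cons_val_zero, Matrix.cons_val_one, Matrix.head_cons,
        Matrix.cons_val_two, Matrix.cons_val_three, Matrix.tail_cons, Matrix.head_fin_const]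
      ring
  have hc := h hw
  rw [Xa, Set.mem_setOf_eq, Fin.sum_univ_four] at hc
  simp only [Matrix.cons_val_zero, Matrix.cons_val_one, Matrix.head_cons,
    Matrix.cons_val_two, Matrix.cons_val_three, Matrix.tail_cons, Matrix.head_fin_const] at hc
  simp only [d3]
  linear_combination hc

lemma nec123 {a b c : V} (h : Xa a ∩ Xa b ⊆ Xa c) : d3 a b c 1 2 3 = 0 := by
  have hw : (![0, a 2 * b 3 - a 3 * b 2, a 3 * b 1 - a 1 * b 3, a 1 * b 2 - a 2 * b 1] : V)
      ∈ Xa a ∩ Xa b := by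
    constructor <;>
    · show _ = _
      rw [Fin.sum_univ_four]
      simp only [Matrix.cons_val_zero, Matrix.cons_val_one, Matrix.head_cons,
        Matrix.cons_val_two, Matrix.cons_val_three, Matrix.tail_cons, Matrix.head_fin_const]
      ring
  have hc := h hw
  rw [Xa, Set.mem_setOf_eq, Fin.sum_univ_four] at hc
  simp only [Matrix.cons_val_zero, Matrix.cons_val_one, Matrix.head_cons,
    Matrix.cons_val_two, Matrix.cons_val_three, Matrix.tail_cons, Matrix.head_fin_const] at hc
  simp only [d3]
  linear_combination hc

/-- transfer of minors from the model to `ℂ`. -/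
lemma d3_em (p q r : MM) (i j k : Fin 4) :
    d3 (em p) (em q) (em r) i j k = GaussianInt.toComplex (d3c p q r i j k) := by
  rw [d3c_eq]
  simp only [d3, em, ← map_mul, ← map_sub, ← map_add]

lemma covZ_iff {p q r : MM} :
    covZ p q r ↔ (d3 (em p) (em q) (em r) 0 1 2 = 0 ∧ d3 (em p) (em q) (em r) 0 1 3 = 0 ∧
      d3 (em p) (em q) (em r) 0 2 3 = 0 ∧ d3 (em p) (em q) (em r) 1 2 3 = 0) := by
  rw [covZ, d3_em, d3_em, d3_em, d3_em]
  simp only [GaussianInt.toComplex_eq_zero]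

/-- linear independence from distinct classes. -/
lemma indep {a b : V} (hpa : PsiV a) (hpb : PsiV b) (ha : ∃ k, a k ≠ 0) (hb : ∃ k, b k ≠ 0)
    (hne : ¬ rel a b) :
    a 0 * b 1 - a 1 * b 0 ≠ 0 ∨ a 0 * b 2 - a 2 * b 0 ≠ 0 ∨ a 0 * b 3 - a 3 * b 0 ≠ 0 ∨
    a 1 * b 2 - a 2 * b 1 ≠ 0 ∨ a 1 * b 3 - a 3 * b 1 ≠ 0 ∨ a 2 * b 3 - a 3 * b 2 ≠ 0 := by
  by_contra hcon
  push_neg at hcon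
  obtain ⟨h1, h2, h3, h4, h5, h6⟩ := hcon
  have hall : ∀ i j : Fin 4, a i * b j - a j * b i = 0 := by
    intro i j
    rcases fin4_cases i with rfl | rfl | rfl | rfl <;> rcases fin4_cases j with rfl | rfl | rfl | rfl <;>
      first
        | ring1
        | linear_combination h1 | linear_combination -h1
        | linear_combination h2 | linear_combination -h2
        | linear_combination h3 | linear_combination -h3
        | linear_combination h4 | linear_combination -h4
        | linear_combination h5 | linear_combination -h5
        | linear_combination h6 | linear_combination -h6
  obtain ⟨k0, hk0⟩ := ha
  have hba : ∀ k, b k = b k0 / a k0 * a k := by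
    intro k
    have h := hall k0 k
    field_simp
    linear_combination h
  apply hne
  refine ⟨b k0 / a k0, ?_, funext fun k => ?_⟩
  · obtain ⟨k1, hbk1⟩ := hb
    have hak1 : a k1 ≠ 0 := by
      intro h0
      rw [hba k1, h0, mul_zero] at hbk1
      exact hbk1 rfl
    have p1 : a k1 ^ 4 = 1 := psi_pow4 (hpa k1) hak1
    have p2 : b k1 ^ 4 = 1 := psi_pow4 (hpb k1) hbk1
    have hl : b k0 / a k0 = b k1 / a k1 := by
      rw [hba k1]; field_simp
    rw [hl, div_pow, p1, p2]
    norm_num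
  · show b k = (b k0 / a k0) * a k
    exact hba k
/-! ### computation of `mult` via the model -/

lemma nodup_canonL : canonL.Nodup := nodup_of_nodupB B5
lemma nodup_canonL1 : canonL1.Nodup := nodup_of_nodupB B5a
lemma nodup_canonL2 : canonL2.Nodup := nodup_of_nodupB B5b
lemma nodup_canonL3 : canonL3.Nodup := nodup_of_nodupB B5c

lemma inj_canon : ∀ p ∈ canonL, ∀ q ∈ canonL, mrel p q → p = q := by
  intro p hp q hq hr
  have h := List.all_eq_true.mp (List.all_eq_true.mp B6 p hp) q hq
  rw [Bool.or_eq_true, Bool.not_eq_true', decide_eq_false_iff_not] at h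
  rcases h with h | h
  · exact absurd hr h
  · exact beqMM_iff.mp h

lemma suppL' : ∀ m ∈ canonL, ∃ k, m k ≠ 0 := by
  intro m hm
  have h := List.all_eq_true.mp B7 m hm
  rw [Bool.or_eq_true, Bool.or_eq_true, Bool.or_eq_true] at h
  rcases h with ((h | h) | h) | h
  exacts [⟨0, bne_iff_ne.mp h⟩, ⟨1, bne_iff_ne.mp h⟩, ⟨2, bne_iff_ne.mp h⟩, ⟨3, bne_iff_ne.mp h⟩]

lemma base_mem3 : base ∈ canonL3 := mem_iff_any.mpr B8

lemma sub1 : ∀ m ∈ canonL1, m ∈ canonL := by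
  intro m hm; rw [canonL, List.append_assoc]; exact List.mem_append_left _ hm
lemma sub2 : ∀ m ∈ canonL2, m ∈ canonL := by
  intro m hm
  rw [canonL, List.append_assoc]
  exact List.mem_append_right _ (List.mem_append_left _ hm)
lemma sub3 : ∀ m ∈ canonL3, m ∈ canonL := by
  intro m hm
  rw [canonL, List.append_assoc]
  exact List.mem_append_right _ (List.mem_append_right _ hm)

lemma base_mem : base ∈ canonL := sub3 base base_mem3

lemma em_ne {m : MM} (h : ∃ k, m k ≠ 0) : ∃ k, em m k ≠ 0 := by
  obtain ⟨k, hk⟩ := h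
  refine ⟨k, ?_⟩
  rw [em, ne_eq, GaussianInt.toComplex_eq_zero, dec_eq_zero]
  exact hk

lemma ncard_img {l : List MM} (hn : l.Nodup) (hsub : ∀ m ∈ l, m ∈ canonL) :
    ((fun m : MM => cls (em m)) '' {m | m ∈ l}).ncard = l.length := by
  have hinj : Set.InjOn (fun m : MM => cls (em m)) {m | m ∈ l} := fun p hp q hq h =>
    inj_canon p (hsub p hp) q (hsub q hq) (cls_em_iff.mp h)
  rw [Set.ncard_image_of_injOn hinj]
  have he : {m : MM | m ∈ l} = ↑l.toFinset := by ext m; simp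
  rw [he, Set.ncard_coe_finset, List.toFinset_card_of_nodup hn]

lemma cov_subset {p q r : MM} (hp : p ∈ canonL) (hq : q ∈ canonL) (hne : ¬ mrel p q)
    (h : covZ p q r) : Xa (em p) ∩ Xa (em q) ⊆ Xa (em r) := by
  obtain ⟨h1, h2, h3, h4⟩ := covZ_iff.mp h
  have hrel : ¬ rel (em p) (em q) := fun hr => hne (cls_em_iff.mp (cls_eq_iff.mpr hr))
  have hind := indep (em_psi p) (em_psi q) (em_ne (suppL' p hp)) (em_ne (suppL' q hq)) hrel
  simp only [d3] at h1 h2 h3 h4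
  rcases hind with hm | hm | hm | hm | hm | hm
  · refine suf 0 1 hm fun k => ?_
    rcases fin4_cases k with rfl | rfl | rfl | rfl <;> simp only [d3] <;>
      first | ring1 | linear_combination h1 | linear_combination h2
  · refine suf 0 2 hm fun k => ?_
    rcases fin4_cases k with rfl | rfl | rfl | rfl <;> simp only [d3] <;>
      first | ring1 | linear_combination -h1 | linear_combination h3
  · refine suf 0 3 hm fun k => ?_
    rcases fin4_cases k with rfl | rfl | rfl | rfl <;> simp only [d3] <;>
      first | ring1 | linear_combination -h2 | linear_combination -h3
  · refine suf 1 2 hm fun k => ?_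
    rcases fin4_cases k with rfl | rfl | rfl | rfl <;> simp only [d3] <;>
      first | ring1 | linear_combination h1 | linear_combination h4
  · refine suf 1 3 hm fun k => ?_
    rcases fin4_cases k with rfl | rfl | rfl | rfl <;> simp only [d3] <;>
      first | ring1 | linear_combination h2 | linear_combination -h4
  · refine suf 2 3 hm fun k => ?_
    rcases fin4_cases k with rfl | rfl | rfl | rfl <;> simp only [d3] <;>
      first | ring1 | linear_combination h3 | linear_combination h4

lemma subset_cov {p q r : MM} (h : Xa (em p) ∩ Xa (em q) ⊆ Xa (em r)) : covZ p q r :=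
  covZ_iff.mpr ⟨nec012 h, nec013 h, nec023 h, nec123 h⟩

lemma hat_char {p q : MM} (hp : p ∈ canonL) (hq : q ∈ canonL) (hne : ¬ mrel p q) :
    LambdaHat (cls (em p)) (cls (em q)) =
      (fun m : MM => cls (em m)) '' {r | r ∈ canonL.filter (fun r => decide (covZ p q r))} := by
  ext c; constructor
  · rintro ⟨hL, xa, xb, xc, hxa, hxb, hxc, hsub⟩
    rw [lam_char] at hL
    obtain ⟨r, hr, rfl⟩ := hL
    have e1 : Xa xa = Xa (em p) := by
      rw [Xa_rel (cls_eq_iff.mp hxa)]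
    have e2 : Xa xb = Xa (em q) := by
      rw [Xa_rel (cls_eq_iff.mp hxb)]
    have e3 : Xa xc = Xa (em r) := by
      rw [Xa_rel (cls_eq_iff.mp hxc)]
    have hsub' : Xa (em p) ∩ Xa (em q) ⊆ Xa (em r) := by
      rw [← e1, ← e2, ← e3]; exact hsub
    exact ⟨r, List.mem_filter.mpr ⟨hr, decide_eq_true (subset_cov hsub')⟩, rfl⟩
  · rintro ⟨r, hr, rfl⟩
    obtain ⟨hrL, hcov⟩ := List.mem_filter.mp hr
    refine ⟨?_, em p, em q, em r, rfl, rfl, rfl, cov_subset hp hq hne (of_decide_eq_true hcov)⟩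
    rw [lam_char]
    exact ⟨r, hrL, rfl⟩

lemma mult_eq {p q : MM} (hp : p ∈ canonL) (hq : q ∈ canonL) (hne : ¬ mrel p q) :
    mult (cls (em p)) (cls (em q)) = multZ p q := by
  rw [mult, hat_char hp hq hne,
    ncard_img (nodup_canonL.filter _) (fun m hm => List.mem_of_mem_filter hm)]
  rfl
/-! ### the diagonal scaling symmetries of the arrangement -/

/-- scale a vector coordinatewise by `u`. -/
def Tv (u : V) (a : V) : V := fun k => u k * a k

lemma rel_Tv {u a b : V} (h : rel a b) : rel (Tv u a) (Tv u b) := by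
  obtain ⟨ξ, hξ, rfl⟩ := h
  refine ⟨ξ, hξ, funext fun k => ?_⟩
  show u k * (ξ • a) k = ξ • (fun k => u k * a k) k
  simp only [Pi.smul_apply, smul_eq_mul]
  ring

/-- the induced map on `Φ`. -/
def gPhi (u : V) : Phi → Phi := Quotient.map (Tv u) (fun _ _ h => rel_Tv h)

lemma gPhi_cls (u a : V) : gPhi u (cls a) = cls (Tv u a) := rfl

/-- the inverse scaling vector. -/
def uinvV (u : V) : V := fun k => u k ^ 3

section scaling

variable {u : V} (hu : ∀ k, u k ^ 4 = 1)

include hu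

lemma Tv_inv (a : V) : Tv (uinvV u) (Tv u a) = a := by
  funext k
  show u k ^ 3 * (u k * a k) = a k
  linear_combination a k * hu k

lemma Tv_inv' (a : V) : Tv u (Tv (uinvV u) a) = a := by
  funext k
  show u k * (u k ^ 3 * a k) = a k
  linear_combination a k * hu k

lemma gg (A : Phi) : gPhi (uinvV u) (gPhi u A) = A := by
  induction A using Quotient.inductionOn with
  | h a => show cls (Tv (uinvV u) (Tv u a)) = cls a; rw [Tv_inv hu]

lemma gg' (A : Phi) : gPhi u (gPhi (uinvV u) A) = A := by
  induction A using Quotient.inductionOn with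
  | h a => show cls (Tv u (Tv (uinvV u) a)) = cls a; rw [Tv_inv' hu]

lemma gPhi_inj : Function.Injective (gPhi u) :=
  Function.LeftInverse.injective (g := gPhi (uinvV u)) (gg hu)

lemma hu_ne : ∀ k, u k ≠ 0 := by
  intro k h0
  have := hu k
  rw [h0] at this
  norm_num at this

lemma hu_inv : ∀ k, uinvV u k ^ 4 = 1 := by
  intro k
  show (u k ^ 3) ^ 4 = 1
  rw [← pow_mul, show 3 * 4 = 4 * 3 by norm_num, pow_mul, hu k, one_pow]

lemma PsiV_Tv {a : V} (h : PsiV a) : PsiV (Tv u a) := by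
  intro k
  rcases Set.mem_insert_iff.mp (h k) with h0 | h4
  · refine Set.mem_insert_iff.mpr (Or.inl ?_)
    show u k * a k = 0
    rw [h0, mul_zero]
  · refine Set.mem_insert_iff.mpr (Or.inr ?_)
    show (u k * a k) ^ 4 = 1
    rw [mul_pow, hu k, h4, mul_one]

lemma Supp_Tv (a : V) : Supp (Tv u a) = Supp a := by
  ext k
  simp only [Supp, Tv, Set.mem_setOf_eq, ne_eq, mul_eq_zero, not_or]
  constructor
  · tauto
  · exact fun h => ⟨hu_ne hu k, h⟩

lemma prod4_Tv (a : V) : prod4 (Tv u a) = prod4 u * prod4 a := by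
  rw [prod4, prod4, prod4, ← Finset.prod_mul_distrib]
  rfl

lemma prod4_uinv : prod4 (uinvV u) = prod4 u ^ 3 := by
  rw [prod4, prod4, ← Finset.prod_pow]
  rfl

variable (hup : prod4 u = 1 ∨ prod4 u = -1)

include hup

lemma hup_inv : prod4 (uinvV u) = 1 ∨ prod4 (uinvV u) = -1 := by
  rw [prod4_uinv hu]
  rcases hup with h | h <;> rw [h] <;> norm_num

lemma lam1_Tv {A : Phi} (h : A ∈ Lambda1) : gPhi u A ∈ Lambda1 := by
  obtain ⟨a, rfl, hpsi, hsupp⟩ := h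
  exact ⟨Tv u a, rfl, PsiV_Tv hu hpsi, by rw [Supp_Tv hu]; exact hsupp⟩

lemma lam2_Tv {A : Phi} (h : A ∈ Lambda2) : gPhi u A ∈ Lambda2 := by
  obtain ⟨a, rfl, hpsi, hsupp⟩ := h
  exact ⟨Tv u a, rfl, PsiV_Tv hu hpsi, by rw [Supp_Tv hu]; exact hsupp⟩

lemma lam3_Tv {A : Phi} (h : A ∈ Lambda3) : gPhi u A ∈ Lambda3 := by
  obtain ⟨a, rfl, hpsi, hsupp, hprod⟩ := h
  refine ⟨Tv u a, rfl, PsiV_Tv hu hpsi, by rw [Supp_Tv hu]; exact hsupp, ?_⟩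
  rw [prod4_Tv hu]
  rcases hup with h | h <;> rcases hprod with h' | h' <;> rw [h, h'] <;> norm_num

lemma lam_Tv {A : Phi} (h : A ∈ Lambda) : gPhi u A ∈ Lambda := by
  rcases h with (h | h) | h
  · exact Or.inl (Or.inl (lam1_Tv hu hup h))
  · exact Or.inl (Or.inr (lam2_Tv hu hup h))
  · exact Or.inr (lam3_Tv hu hup h)

omit hup

lemma sub_Tv {a b c : V} (h : Xa a ∩ Xa b ⊆ Xa c) :
    Xa (Tv u a) ∩ Xa (Tv u b) ⊆ Xa (Tv u c) := by
  have hX : ∀ v x : V, x ∈ Xa (Tv u v) ↔ Tv u x ∈ Xa v := by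
    intro v x
    show (∑ k, (u k * v k) * x k = 0) ↔ (∑ k, v k * (u k * x k) = 0)
    rw [Finset.sum_congr rfl (fun k _ => by ring : ∀ k ∈ Finset.univ,
      (u k * v k) * x k = v k * (u k * x k))]
  rintro x ⟨hxa, hxb⟩
  rw [hX] at hxa hxb ⊢
  exact h ⟨hxa, hxb⟩

include hup

lemma hat_Tv (A B : Phi) :
    LambdaHat (gPhi u A) (gPhi u B) = gPhi u '' LambdaHat A B := by
  have main : ∀ (v : V), (∀ k, v k ^ 4 = 1) → (prod4 v = 1 ∨ prod4 v = -1) →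
      ∀ A B : Phi, gPhi v '' LambdaHat A B ⊆ LambdaHat (gPhi v A) (gPhi v B) := by
    rintro v hv hvp A' B' c ⟨c', ⟨hL, xa, xb, xc, hxa, hxb, hxc, hsub⟩, rfl⟩
    exact ⟨lam_Tv hv hvp hL, Tv v xa, Tv v xb, Tv v xc,
      by rw [← hxa]; rfl, by rw [← hxb]; rfl, by rw [← hxc]; rfl, sub_Tv hv hsub⟩
  apply Set.Subset.antisymm
  · intro c hc
    have h2 := main (uinvV u) (hu_inv hu) (hup_inv hu hup) (gPhi u A) (gPhi u B)
    have hc' : gPhi (uinvV u) c ∈ LambdaHat (gPhi (uinvV u) (gPhi u A)) (gPhi (uinvV u) (gPhi u B)) :=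
      h2 ⟨c, hc, rfl⟩
    rw [gg hu, gg hu] at hc'
    exact ⟨gPhi (uinvV u) c, hc', gg' hu c⟩
  · exact main u hu hup A B

lemma mult_Tv (A B : Phi) : mult (gPhi u A) (gPhi u B) = mult A B := by
  rw [mult, mult, hat_Tv hu hup, Set.ncard_image_of_injective _ (gPhi_inj hu)]

lemma pow_Tv (S : Set Phi) (hS : ∀ B ∈ S, gPhi u B ∈ S)
    (hS' : ∀ B ∈ S, gPhi (uinvV u) B ∈ S) (k : ℕ) (A : Phi) :
    LambdaPow S k (gPhi u A) = gPhi u '' LambdaPow S k A := by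
  ext B'; constructor
  · rintro ⟨hBS, hBne, hBmult⟩
    refine ⟨gPhi (uinvV u) B', ⟨hS' B' hBS, ?_, ?_⟩, gg' hu B'⟩
    · intro h
      exact hBne (by rw [← gg' hu B', h])
    · rw [← mult_Tv hu hup A (gPhi (uinvV u) B'), gg' hu B']
      exact hBmult
  · rintro ⟨B, ⟨hBS, hBne, hBmult⟩, rfl⟩
    refine ⟨hS B hBS, ?_, ?_⟩
    · intro h
      exact hBne (gPhi_inj hu h)
    · rw [mult_Tv hu hup]
      exact hBmult

lemma ncard_pow_Tv (S : Set Phi) (hS : ∀ B ∈ S, gPhi u B ∈ S)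
    (hS' : ∀ B ∈ S, gPhi (uinvV u) B ∈ S) (k : ℕ) (A : Phi) :
    (LambdaPow S k (gPhi u A)).ncard = (LambdaPow S k A).ncard := by
  rw [pow_Tv hu hup S hS hS' k A, Set.ncard_image_of_injective _ (gPhi_inj hu)]

end scaling
/-! ### final counting at the base point -/

def mtab (m : MM) : Bool × ℕ := (decide (mrel base m), multZ base m)

def predk (k : ℕ) : MM → Bool := fun m => !(decide (mrel base m)) && (multZ base m == k)

lemma T1 : canonL1.map mtab = [(false, 3), (false, 3), (false, 3), (false, 3)] := by decide +kernel
lemma T2 : canonL2.map mtab = [(false, 6), (false, 3), (false, 2), (false, 3), (false, 6), (false, 3), (false, 2), (false, 3), (false, 6), (false, 3), (false, 2), (false, 3), (false, 6), (false, 3), (false, 2), (false, 3), (false, 6), (false, 3), (false, 2), (false, 3), (false, 6), (false, 3), (false, 2), (false, 3)] := by decide +kernel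
lemma T3 : canonL3.map mtab = [(true, 60), (false, 3), (false, 6), (false, 3), (false, 3), (false, 6), (false, 3), (false, 6), (false, 6), (false, 3), (false, 6), (false, 3), (false, 3), (false, 2), (false, 3), (false, 2), (false, 3), (false, 6), (false, 3), (false, 2), (false, 6), (false, 3), (false, 2), (false, 3), (false, 3), (false, 6), (false, 3), (false, 2), (false, 2), (false, 3), (false, 6), (false, 3)] := by decide +kernel

lemma pow_char {lj : List MM} {LJ : Set Phi}
    (hchar : LJ = (fun m : MM => cls (em m)) '' {m | m ∈ lj})
    (hsubj : ∀ m ∈ lj, m ∈ canonL) (k : ℕ) :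
    LambdaPow LJ k (cls (em base)) =
      (fun m : MM => cls (em m)) '' {m | m ∈ lj.filter (predk k)} := by
  ext B; constructor
  · rintro ⟨hS, hne, hmult⟩
    rw [hchar] at hS
    obtain ⟨m, hm, rfl⟩ := hS
    have hmrel : ¬ mrel base m := fun h => hne ((cls_em_iff.mpr h).symm)
    have hmv := mult_eq base_mem (hsubj m hm) hmrel
    refine ⟨m, List.mem_filter.mpr ⟨hm, ?_⟩, rfl⟩
    show predk k m = true
    simp only [predk, Bool.and_eq_true, Bool.not_eq_true', decide_eq_false_iff_not, beq_iff_eq]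
    exact ⟨hmrel, by rw [← hmv]; exact hmult⟩
  · rintro ⟨m, hm, rfl⟩
    obtain ⟨hml, hpred⟩ := List.mem_filter.mp hm
    simp only [predk, Bool.and_eq_true, Bool.not_eq_true', decide_eq_false_iff_not,
      beq_iff_eq] at hpred
    refine ⟨?_, ?_, ?_⟩
    · rw [hchar]; exact ⟨m, hml, rfl⟩
    · exact fun h => hpred.1 (cls_em_iff.mp h.symm)
    · rw [mult_eq base_mem (hsubj m hml) hpred.1]; exact hpred.2

lemma count_pow {lj : List MM} {LJ : Set Phi} (hn : lj.Nodup)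
    (hchar : LJ = (fun m : MM => cls (em m)) '' {m | m ∈ lj})
    (hsubj : ∀ m ∈ lj, m ∈ canonL) (k : ℕ) :
    (LambdaPow LJ k (cls (em base))).ncard = (lj.filter (predk k)).length := by
  rw [pow_char hchar hsubj k]
  exact ncard_img (hn.filter _) (fun m hm => hsubj m (List.mem_of_mem_filter hm))

lemma len_eval (lj : List MM) (k : ℕ) :
    (lj.filter (predk k)).length =
      ((lj.map mtab).filter (fun p => !p.1 && (p.2 == k))).length := by
  rw [List.filter_map, List.length_map]
  rfl

lemma N13 : (LambdaPow Lambda1 3 (cls (em base))).ncard = 4 := by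
  rw [count_pow nodup_canonL1 lam1_char sub1 3, len_eval, T1]; rfl
lemma N12 : (LambdaPow Lambda1 2 (cls (em base))).ncard = 0 := by
  rw [count_pow nodup_canonL1 lam1_char sub1 2, len_eval, T1]; rfl
lemma N16 : (LambdaPow Lambda1 6 (cls (em base))).ncard = 0 := by
  rw [count_pow nodup_canonL1 lam1_char sub1 6, len_eval, T1]; rfl
lemma N22 : (LambdaPow Lambda2 2 (cls (em base))).ncard = 6 := by
  rw [count_pow nodup_canonL2 lam2_char sub2 2, len_eval, T2]; rfl
lemma N23 : (LambdaPow Lambda2 3 (cls (em base))).ncard = 12 := by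
  rw [count_pow nodup_canonL2 lam2_char sub2 3, len_eval, T2]; rfl
lemma N26 : (LambdaPow Lambda2 6 (cls (em base))).ncard = 6 := by
  rw [count_pow nodup_canonL2 lam2_char sub2 6, len_eval, T2]; rfl
lemma N32 : (LambdaPow Lambda3 2 (cls (em base))).ncard = 6 := by
  rw [count_pow nodup_canonL3 lam3_char sub3 2, len_eval, T3]; rfl
lemma N33 : (LambdaPow Lambda3 3 (cls (em base))).ncard = 16 := by
  rw [count_pow nodup_canonL3 lam3_char sub3 3, len_eval, T3]; rfl
lemma N36 : (LambdaPow Lambda3 6 (cls (em base))).ncard = 9 := by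
  rw [count_pow nodup_canonL3 lam3_char sub3 6, len_eval, T3]; rfl

lemma msupp_all {m : MM} (h : msupp m = 4) : ∀ k, m k ≠ 0 := by
  intro k hk
  rw [msupp] at h
  rcases fin4_cases k with rfl | rfl | rfl | rfl <;>
    (split_ifs at h <;> first | omega | exact absurd hk (by assumption))
lemma stmt13_aux : ∀ A ∈ Lambda3,
    (LambdaPow Lambda1 3 A).ncard = 4 ∧
    (LambdaPow Lambda2 2 A).ncard = 6 ∧
    (LambdaPow Lambda2 3 A).ncard = 12 ∧
    (LambdaPow Lambda2 6 A).ncard = 6 ∧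
    (LambdaPow Lambda3 2 A).ncard = 6 ∧
    (LambdaPow Lambda3 3 A).ncard = 16 ∧
    (LambdaPow Lambda3 6 A).ncard = 9 ∧
    (LambdaPow Lambda1 2 A).ncard = 0 ∧
    (LambdaPow Lambda1 6 A).ncard = 0 := by
  intro A hA
  rw [lam3_char] at hA
  obtain ⟨m, hm, hAeq⟩ := hA
  have hAeq' : cls (em m) = A := hAeq
  rw [← hAeq']
  have hm3 := memL3' m hm
  have hnz : ∀ k, m k ≠ 0 := msupp_all hm3.1
  have hu : ∀ k, em m k ^ 4 = 1 := fun k => by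
    show GaussianInt.toComplex (dec (m k)) ^ 4 = 1
    rw [← map_pow, dec_pow4 _ (hnz k), map_one]
  have hup : prod4 (em m) = 1 ∨ prod4 (em m) = -1 := (prod_cond m).mpr hm3.2
  have hbase : Tv (em m) (em base) = em m := by
    funext k
    show em m k * em base k = em m k
    have hb1 : em base k = 1 := tc1
    rw [hb1, mul_one]
  have hA0 : cls (em m) = gPhi (em m) (cls (em base)) := by rw [gPhi_cls, hbase]
  rw [hA0]
  have hu' := hu_inv hu
  have hup' := hup_inv hu hup
  refine ⟨?_, ?_, ?_, ?_, ?_, ?_, ?_, ?_, ?_⟩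
  · rw [ncard_pow_Tv hu hup Lambda1 (fun B hB => lam1_Tv hu hup hB)
      (fun B hB => lam1_Tv hu' hup' hB)]
    exact N13
  · rw [ncard_pow_Tv hu hup Lambda2 (fun B hB => lam2_Tv hu hup hB)
      (fun B hB => lam2_Tv hu' hup' hB)]
    exact N22
  · rw [ncard_pow_Tv hu hup Lambda2 (fun B hB => lam2_Tv hu hup hB)
      (fun B hB => lam2_Tv hu' hup' hB)]
    exact N23
  · rw [ncard_pow_Tv hu hup Lambda2 (fun B hB => lam2_Tv hu hup hB)
      (fun B hB => lam2_Tv hu' hup' hB)]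
    exact N26
  · rw [ncard_pow_Tv hu hup Lambda3 (fun B hB => lam3_Tv hu hup hB)
      (fun B hB => lam3_Tv hu' hup' hB)]
    exact N32
  · rw [ncard_pow_Tv hu hup Lambda3 (fun B hB => lam3_Tv hu hup hB)
      (fun B hB => lam3_Tv hu' hup' hB)]
    exact N33
  · rw [ncard_pow_Tv hu hup Lambda3 (fun B hB => lam3_Tv hu hup hB)
      (fun B hB => lam3_Tv hu' hup' hB)]
    exact N36
  · rw [ncard_pow_Tv hu hup Lambda1 (fun B hB => lam1_Tv hu hup hB)
      (fun B hB => lam1_Tv hu' hup' hB)]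
    exact N12
  · rw [ncard_pow_Tv hu hup Lambda1 (fun B hB => lam1_Tv hu hup hB)
      (fun B hB => lam1_Tv hu' hup' hB)]
    exact N16

/-- for every `[a] ∈ Λ₃`: `|Λ₁³(a)| = 4`, `|Λ₂²(a)| = 6`, `|Λ₂³(a)| = 12`,
`|Λ₂⁶(a)| = 6`, `|Λ₃²(a)| = 6`, `|Λ₃³(a)| = 16`, `|Λ₃⁶(a)| = 9`, and
`|Λ₁²(a)| = |Λ₁⁶(a)| = 0`. -/
theorem stmt13 : ∀ A ∈ Lambda3,
    (LambdaPow Lambda1 3 A).ncard = 4 ∧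
    (LambdaPow Lambda2 2 A).ncard = 6 ∧
    (LambdaPow Lambda2 3 A).ncard = 12 ∧
    (LambdaPow Lambda2 6 A).ncard = 6 ∧
    (LambdaPow Lambda3 2 A).ncard = 6 ∧
    (LambdaPow Lambda3 3 A).ncard = 16 ∧
    (LambdaPow Lambda3 6 A).ncard = 9 ∧
    (LambdaPow Lambda1 2 A).ncard = 0 ∧
    (LambdaPow Lambda1 6 A).ncard = 0 := stmt13_aux

end G31
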